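/- Let r: [0,1] → ℝ be strictly increasing and differentiable with 0 < r(1) ≤ 1 and ∫₀¹ r(x) dx ≥ 0. Define s(1) = r(1) and s(x) = (∫ₓ¹ r(z) dz)/(1 - x) for x < 1. Then s is non-negative, differentiable on [0,1), satisfies s(x) ≤ 1 for all x, and satisfies r(x) = s(x) - (1 - x)·s'(x) for all x ∈ [0,1). -/
import Mathlib


open MeasureTheory Set intervalIntegral

/-- Let `r : [0,1] → ℝ` be strictly increasing and differentiable with `0 < r 1 ≤ 1` and
`∫₀¹ r ≥ 0`. Define `s 1 = r 1` and `s x = (∫ₓ¹ r) / (1 - x)` for `x < 1`. Then `s` is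
non-negative, differentiable on `[0,1)`, bounded by `1`, and satisfies
`r x = s x - (1 - x) * s' x` on `[0,1)`. -/
theorem stmt3 (r s : ℝ → ℝ)
    (hr : StrictMonoOn r (Icc (0:ℝ) 1))
    (hrd : ∀ x ∈ Icc (0:ℝ) 1, DifferentiableWithinAt ℝ r (Icc (0:ℝ) 1) x)
    (hr1 : 0 < r 1) (hr1' : r 1 ≤ 1)
    (hrint : 0 ≤ ∫ x in (0:ℝ)..1, r x)
    (hs1 : s 1 = r 1)
    (hs : ∀ x ∈ Ico (0:ℝ) 1, s x = (∫ z in x..1, r z) / (1 - x)) :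
    (∀ x ∈ Icc (0:ℝ) 1, 0 ≤ s x) ∧
    (∀ x ∈ Ico (0:ℝ) 1, DifferentiableWithinAt ℝ s (Ico (0:ℝ) 1) x) ∧
    (∀ x ∈ Icc (0:ℝ) 1, s x ≤ 1) ∧
    (∀ x ∈ Ico (0:ℝ) 1, r x = s x - (1 - x) * derivWithin s (Ico (0:ℝ) 1) x) := by
  have hrc : ContinuousOn r (Icc (0:ℝ) 1) := fun x hx => (hrd x hx).continuousWithinAt
  have hmono : MonotoneOn r (Icc (0:ℝ) 1) := hr.monotoneOn
  -- interval integrability on any subinterval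
  have hint : ∀ a b : ℝ, a ∈ Icc (0:ℝ) 1 → b ∈ Icc (0:ℝ) 1 →
      IntervalIntegrable r volume a b := by
    intro a b ha hb
    exact (hrc.mono (uIcc_subset_Icc ha hb)).intervalIntegrable
  -- key: the tail integral is nonnegative
  have hF : ∀ x ∈ Ico (0:ℝ) 1, 0 ≤ ∫ z in x..1, r z := by
    intro x hx
    by_contra h
    push_neg at h
    have hx1 : x < 1 := hx.2
    have hx0 : 0 ≤ x := hx.1
    have hxm : x ∈ Icc (0:ℝ) 1 := ⟨hx0, hx1.le⟩
    -- r x * (1 - x) ≤ ∫ x..1 r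
    have h1 : r x * (1 - x) ≤ ∫ z in x..1, r z := by
      have hmx : ∫ z in x..1, (fun _ => r x) z ≤ ∫ z in x..1, r z := by
        apply intervalIntegral.integral_mono_on hx1.le intervalIntegrable_const
          (hint x 1 hxm (by norm_num))
        intro z hz
        exact hmono hxm ⟨le_trans hx0 hz.1, hz.2⟩ hz.1
      simpa [mul_comm] using hmx
    have hrx : r x < 0 := by
      nlinarith [h, h1, sub_pos.mpr hx1]
    -- ∫ 0..x r ≤ x * r x ≤ 0
    have h2 : ∫ z in (0:ℝ)..x, r z ≤ x * r x := by
      have hmx : ∫ z in (0:ℝ)..x, r z ≤ ∫ z in (0:ℝ)..x, (fun _ => r x) z := by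
        apply intervalIntegral.integral_mono_on hx0 (hint 0 x (by norm_num) hxm)
          intervalIntegrable_const
        intro z hz
        exact hmono ⟨hz.1, le_trans hz.2 hx1.le⟩ hxm hz.2
      simpa using hmx
    have hsplit : (∫ z in (0:ℝ)..1, r z) = (∫ z in (0:ℝ)..x, r z) + ∫ z in x..1, r z :=
      (intervalIntegral.integral_add_adjacent_intervals (hint 0 x (by norm_num) hxm)
        (hint x 1 hxm (by norm_num))).symm
    nlinarith [h, h2, hsplit, hrint, mul_nonpos_of_nonneg_of_nonpos hx0 hrx.le]
  -- derivative of the tail integral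
  have hFd : ∀ x ∈ Ico (0:ℝ) 1, HasDerivWithinAt (fun u => ∫ z in u..1, r z)
      (-(r x)) (Ico (0:ℝ) 1) x := by
    intro x hx
    have hxm : x ∈ Icc (0:ℝ) 1 := ⟨hx.1, hx.2.le⟩
    haveI : Fact (x ∈ Icc (0:ℝ) 1) := ⟨hxm⟩
    have hmeas : StronglyMeasurableAtFilter r (nhdsWithin x (Icc (0:ℝ) 1)) volume :=
      ⟨Icc (0:ℝ) 1, self_mem_nhdsWithin, (hrc.aestronglyMeasurable measurableSet_Icc)⟩
    have := intervalIntegral.integral_hasDerivWithinAt_left (hint x 1 hxm (by norm_num))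
      (s := Icc (0:ℝ) 1) (t := Icc (0:ℝ) 1) hmeas (hrc.continuousWithinAt hxm)
    exact this.mono Ico_subset_Icc_self
  -- derivative of s on Ico 0 1
  have hsd : ∀ x ∈ Ico (0:ℝ) 1, HasDerivWithinAt s
      (((-(r x)) * (1 - x) - (∫ z in x..1, r z) * (-1)) / (1 - x)^2) (Ico (0:ℝ) 1) x := by
    intro x hx
    have hx1 : (1:ℝ) - x ≠ 0 := by have := hx.2; linarith [sub_pos.mpr hx.2]
    have h1 : HasDerivWithinAt (fun u : ℝ => 1 - u) (-1) (Ico (0:ℝ) 1) x := by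
      simpa using ((hasDerivWithinAt_id x (Ico (0:ℝ) 1)).const_sub 1)
    have hdiv := (hFd x hx).div h1 hx1
    exact hdiv.congr (fun y hy => hs y hy) (hs x hx)
  refine ⟨?_, ?_, ?_, ?_⟩
  · intro x hx
    rcases eq_or_lt_of_le hx.2 with h1 | h1
    · rw [show x = 1 from h1, hs1]; exact hr1.le
    · have hx' : x ∈ Ico (0:ℝ) 1 := ⟨hx.1, h1⟩
      rw [hs x hx']
      exact div_nonneg (hF x hx') (by linarith)
  · intro x hx
    exact (hsd x hx).differentiableWithinAt
  · intro x hx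
    rcases eq_or_lt_of_le hx.2 with h1 | h1
    · rw [show x = 1 from h1, hs1]; exact hr1'
    · have hx' : x ∈ Ico (0:ℝ) 1 := ⟨hx.1, h1⟩
      rw [hs x hx']
      rw [div_le_one (by linarith)]
      have hmx : ∫ z in x..1, r z ≤ ∫ z in x..1, (fun _ => (1:ℝ)) z := by
        apply intervalIntegral.integral_mono_on h1.le (hint x 1 ⟨hx.1, h1.le⟩ (by norm_num))
          intervalIntegrable_const
        intro z hz
        exact le_trans (hmono ⟨le_trans hx.1 hz.1, hz.2⟩ (by norm_num) hz.2) hr1'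
      simpa using hmx
  · intro x hx
    have hx1 : (0:ℝ) < 1 - x := sub_pos.mpr hx.2
    have hd := (hsd x hx).derivWithin (uniqueDiffOn_Ico 0 1 x hx)
    rw [hd, hs x hx]
    field_simp
    ring
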